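/- Let 𝓐₁ ⊆ B(H₁) and 𝓐₂ ⊆ B(H₂) be unital operator algebras, and let 𝓐 = 𝓐₁ ⊕ 𝓐₂ = {T₁ ⊕ T₂ : T₁ ∈ 𝓐₁, T₂ ∈ 𝓐₂} acting on H₁ ⊕ H₂. If 𝓐₁ and 𝓐₂ both possess property (V), then 𝓐 possesses property (V). In particular, Lat 𝓐 = {L₁ ⊕ L₂ : L₁ ∈ Lat 𝓐₁, L₂ ∈ Lat 𝓐₂}, and for x = x₁ ⊕ x₂, y = y₁ ⊕ y₂ one has ‖ω_{x,y}|_𝓐‖ = ‖ω_{x₁,y₁}|_{𝓐₁}‖ + ‖ω_{x₂,y₂}|_{𝓐₂}‖. -/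

import Mathlib

set_option linter.unusedSectionVars false


noncomputable section

variable {H : Type*} [NormedAddCommGroup H] [InnerProductSpace ℂ H] [CompleteSpace H]

/-- An orthogonal projection: a self-adjoint idempotent bounded operator. -/
def IsOrthoProj (L : H →L[ℂ] H) : Prop := IsSelfAdjoint L ∧ L * L = L

/-- `Lat 𝓐`: the invariant projection lattice of a set of operators. -/
def latOf (𝓐 : Set (H →L[ℂ] H)) : Set (H →L[ℂ] H) :=
  {L | IsOrthoProj L ∧ ∀ T ∈ 𝓐, (1 - L) * T * L = 0}

/-- `‖ω_{x,y}|_𝓐‖ = sup {|⟨Tx, y⟩| : T ∈ 𝓐, ‖T‖ ≤ 1}`. -/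
def omegaNorm (𝓐 : Set (H →L[ℂ] H)) (x y : H) : ℝ :=
  sSup {r : ℝ | ∃ T ∈ 𝓐, ‖T‖ ≤ 1 ∧ r = ‖(inner ℂ (T x) y : ℂ)‖}

/-- Property (V) of a set of operators. -/
def PropertyV (𝓐 : Set (H →L[ℂ] H)) : Prop :=
  ∀ x y : H,
    sInf {r : ℝ | ∃ L ∈ latOf 𝓐, r = ‖x - L x‖ ^ 2 + ‖L y‖ ^ 2} ≤ omegaNorm 𝓐 x y

variable {H₁ H₂ : Type*} [NormedAddCommGroup H₁] [InnerProductSpace ℂ H₁] [CompleteSpace H₁]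
  [NormedAddCommGroup H₂] [InnerProductSpace ℂ H₂] [CompleteSpace H₂]

/-- The direct sum `T₁ ⊕ T₂` of two operators, acting on the Hilbert space direct sum
`H₁ ⊕ H₂ = WithLp 2 (H₁ × H₂)`. -/
def dsum (T₁ : H₁ →L[ℂ] H₁) (T₂ : H₂ →L[ℂ] H₂) :
    WithLp 2 (H₁ × H₂) →L[ℂ] WithLp 2 (H₁ × H₂) :=
  ((WithLp.prodContinuousLinearEquiv 2 ℂ H₁ H₂).symm : H₁ × H₂ →L[ℂ] WithLp 2 (H₁ × H₂)) ∘L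
    (T₁.prodMap T₂) ∘L
    ((WithLp.prodContinuousLinearEquiv 2 ℂ H₁ H₂) : WithLp 2 (H₁ × H₂) →L[ℂ] H₁ × H₂)

/-- A vector `x₁ ⊕ x₂ ∈ H₁ ⊕ H₂`. -/
def dvec (x₁ : H₁) (x₂ : H₂) : WithLp 2 (H₁ × H₂) :=
  (WithLp.equiv 2 (H₁ × H₂)).symm (x₁, x₂)

/-! ### auxiliary lemmas -/

lemma dsum_apply (T₁ : H₁ →L[ℂ] H₁) (T₂ : H₂ →L[ℂ] H₂) (v : WithLp 2 (H₁ × H₂)) :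
    dsum T₁ T₂ v = dvec (T₁ v.fst) (T₂ v.snd) := rfl

lemma dvec_eta (v : WithLp 2 (H₁ × H₂)) : dvec v.fst v.snd = v := rfl

lemma dsum_mul (T₁ S₁ : H₁ →L[ℂ] H₁) (T₂ S₂ : H₂ →L[ℂ] H₂) :
    dsum T₁ T₂ * dsum S₁ S₂ = dsum (T₁ * S₁) (T₂ * S₂) := rfl

lemma dsum_one : dsum (1 : H₁ →L[ℂ] H₁) (1 : H₂ →L[ℂ] H₂) = 1 := rfl
lemma dsum_zero : dsum (0 : H₁ →L[ℂ] H₁) (0 : H₂ →L[ℂ] H₂) = 0 := rfl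

lemma dsum_sub (T₁ S₁ : H₁ →L[ℂ] H₁) (T₂ S₂ : H₂ →L[ℂ] H₂) :
    dsum T₁ T₂ - dsum S₁ S₂ = dsum (T₁ - S₁) (T₂ - S₂) := rfl

lemma inner_dvec (a c : H₁) (b d : H₂) :
    (inner ℂ (dvec a b) (dvec c d) : ℂ) = inner ℂ a c + inner ℂ b d := rfl

lemma norm_dvec_sq (a : H₁) (b : H₂) : ‖dvec a b‖ ^ 2 = ‖a‖ ^ 2 + ‖b‖ ^ 2 :=
  WithLp.prod_norm_sq_eq_of_L2 (dvec a b)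

lemma dvec_sub (a c : H₁) (b d : H₂) : dvec a b - dvec c d = dvec (a - c) (b - d) := rfl
lemma dvec_add (a c : H₁) (b d : H₂) : dvec a b + dvec c d = dvec (a + c) (b + d) := rfl

lemma dsum_inj {T₁ S₁ : H₁ →L[ℂ] H₁} {T₂ S₂ : H₂ →L[ℂ] H₂}
    (h : dsum T₁ T₂ = dsum S₁ S₂) : T₁ = S₁ ∧ T₂ = S₂ := by
  constructor
  · ext x
    have := congrArg (fun A : WithLp 2 (H₁ × H₂) →L[ℂ] WithLp 2 (H₁ × H₂) =>
      (A (dvec x 0)).fst) h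
    simpa [dsum_apply, dvec] using this
  · ext x
    have := congrArg (fun A : WithLp 2 (H₁ × H₂) →L[ℂ] WithLp 2 (H₁ × H₂) =>
      (A (dvec 0 x)).snd) h
    simpa [dsum_apply, dvec] using this

open ContinuousLinearMap in
lemma dsum_adjoint (T₁ : H₁ →L[ℂ] H₁) (T₂ : H₂ →L[ℂ] H₂) :
    adjoint (dsum T₁ T₂) = dsum (adjoint T₁) (adjoint T₂) := by
  symm
  rw [ContinuousLinearMap.eq_adjoint_iff]
  intro x y
  show (inner ℂ (dvec (adjoint T₁ x.fst) (adjoint T₂ x.snd)) y : ℂ) =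
    inner ℂ x (dvec (T₁ y.fst) (T₂ y.snd))
  rw [← dvec_eta y, ← dvec_eta x, inner_dvec, inner_dvec]
  simp [ContinuousLinearMap.adjoint_inner_left, dvec]

lemma isSelfAdjoint_dsum {T₁ : H₁ →L[ℂ] H₁} {T₂ : H₂ →L[ℂ] H₂}
    (h₁ : IsSelfAdjoint T₁) (h₂ : IsSelfAdjoint T₂) : IsSelfAdjoint (dsum T₁ T₂) := by
  rw [isSelfAdjoint_iff, ContinuousLinearMap.star_eq_adjoint, dsum_adjoint]
  rw [isSelfAdjoint_iff, ContinuousLinearMap.star_eq_adjoint] at h₁ h₂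
  rw [h₁, h₂]

lemma isSelfAdjoint_dsum_iff {T₁ : H₁ →L[ℂ] H₁} {T₂ : H₂ →L[ℂ] H₂} :
    IsSelfAdjoint (dsum T₁ T₂) ↔ IsSelfAdjoint T₁ ∧ IsSelfAdjoint T₂ := by
  constructor
  · intro h
    rw [isSelfAdjoint_iff, ContinuousLinearMap.star_eq_adjoint, dsum_adjoint] at h
    obtain ⟨e₁, e₂⟩ := dsum_inj h
    exact ⟨by rwa [isSelfAdjoint_iff, ContinuousLinearMap.star_eq_adjoint],
      by rwa [isSelfAdjoint_iff, ContinuousLinearMap.star_eq_adjoint]⟩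
  · exact fun ⟨a, b⟩ => isSelfAdjoint_dsum a b

lemma norm_dvec_fst (a : H₁) : ‖(dvec a 0 : WithLp 2 (H₁ × H₂))‖ = ‖a‖ :=
  WithLp.norm_toLp_fst 2 H₁ H₂ a

lemma norm_dvec_snd (b : H₂) : ‖(dvec 0 b : WithLp 2 (H₁ × H₂))‖ = ‖b‖ :=
  WithLp.norm_toLp_snd 2 H₁ H₂ b

lemma dsum_norm_le {T₁ : H₁ →L[ℂ] H₁} {T₂ : H₂ →L[ℂ] H₂}
    (h₁ : ‖T₁‖ ≤ 1) (h₂ : ‖T₂‖ ≤ 1) : ‖dsum T₁ T₂‖ ≤ 1 := by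
  refine ContinuousLinearMap.opNorm_le_bound _ zero_le_one fun v => ?_
  rw [one_mul]
  have hsq : ‖dsum T₁ T₂ v‖ ^ 2 ≤ ‖v‖ ^ 2 := by
    rw [dsum_apply, norm_dvec_sq, ← dvec_eta v, norm_dvec_sq]
    gcongr
    · calc ‖T₁ v.fst‖ ≤ ‖T₁‖ * ‖v.fst‖ := T₁.le_opNorm _
        _ ≤ 1 * ‖v.fst‖ := by gcongr
        _ = ‖v.fst‖ := one_mul _
    · calc ‖T₂ v.snd‖ ≤ ‖T₂‖ * ‖v.snd‖ := T₂.le_opNorm _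
        _ ≤ 1 * ‖v.snd‖ := by gcongr
        _ = ‖v.snd‖ := one_mul _
  exact (pow_le_pow_iff_left₀ (norm_nonneg _) (norm_nonneg _) two_ne_zero).mp hsq

lemma norm_comp_le {T₁ : H₁ →L[ℂ] H₁} {T₂ : H₂ →L[ℂ] H₂}
    (h : ‖dsum T₁ T₂‖ ≤ 1) : ‖T₁‖ ≤ 1 ∧ ‖T₂‖ ≤ 1 := by
  constructor
  · refine ContinuousLinearMap.opNorm_le_bound _ zero_le_one fun x => ?_
    have h1 : T₁ x = (dsum T₁ T₂ (dvec x 0)).fst := by simp [dsum_apply, dvec]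
    have h2 : ‖T₁ x‖ ≤ ‖dsum T₁ T₂ (dvec x 0)‖ := by
      rw [h1]
      have := norm_dvec_sq (H₂ := H₂) (dsum T₁ T₂ (dvec x 0)).fst (dsum T₁ T₂ (dvec x 0)).snd
      rw [dvec_eta] at this
      nlinarith [norm_nonneg (dsum T₁ T₂ (dvec x 0)), norm_nonneg (dsum T₁ T₂ (dvec x 0)).fst,
        sq_nonneg ‖(dsum T₁ T₂ (dvec x 0)).snd‖, norm_nonneg (dsum T₁ T₂ (dvec x 0)).snd]
    calc ‖T₁ x‖ ≤ ‖dsum T₁ T₂ (dvec x 0)‖ := h2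
      _ ≤ ‖dsum T₁ T₂‖ * ‖(dvec x 0 : WithLp 2 (H₁ × H₂))‖ := (dsum T₁ T₂).le_opNorm _
      _ ≤ 1 * ‖x‖ := by rw [norm_dvec_fst]; gcongr
  · refine ContinuousLinearMap.opNorm_le_bound _ zero_le_one fun x => ?_
    have h1 : T₂ x = (dsum T₁ T₂ (dvec 0 x)).snd := by simp [dsum_apply, dvec]
    have h2 : ‖T₂ x‖ ≤ ‖dsum T₁ T₂ (dvec 0 x)‖ := by
      rw [h1]
      have := norm_dvec_sq (H₂ := H₂) (dsum T₁ T₂ (dvec 0 x)).fst (dsum T₁ T₂ (dvec 0 x)).snd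
      rw [dvec_eta] at this
      nlinarith [norm_nonneg (dsum T₁ T₂ (dvec 0 x)), norm_nonneg (dsum T₁ T₂ (dvec 0 x)).snd,
        sq_nonneg ‖(dsum T₁ T₂ (dvec 0 x)).fst‖, norm_nonneg (dsum T₁ T₂ (dvec 0 x)).fst]
    calc ‖T₂ x‖ ≤ ‖dsum T₁ T₂ (dvec 0 x)‖ := h2
      _ ≤ ‖dsum T₁ T₂‖ * ‖(dvec 0 x : WithLp 2 (H₁ × H₂))‖ := (dsum T₁ T₂).le_opNorm _
      _ ≤ 1 * ‖x‖ := by rw [norm_dvec_snd]; gcongr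

lemma exists_unit_conj_mul (c : ℂ) : ∃ l : ℂ, ‖l‖ = 1 ∧ (starRingEnd ℂ) l * c = (‖c‖ : ℂ) := by
  by_cases hc : c = 0
  · exact ⟨1, by simp [hc]⟩
  · have h0 : (‖c‖ : ℂ) ≠ 0 := by exact_mod_cast norm_ne_zero_iff.mpr hc
    refine ⟨c / ‖c‖, by simp [norm_div, hc], ?_⟩
    rw [map_div₀, Complex.conj_ofReal, div_mul_eq_mul_div, ← Complex.normSq_eq_conj_mul_self,
      Complex.normSq_eq_norm_sq]
    push_cast
    rw [sq, mul_div_assoc, div_self h0, mul_one]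

lemma omegaSet_zero_mem (𝓐 : Subalgebra ℂ (H →L[ℂ] H)) (x y : H) :
    (0 : ℝ) ∈ {r : ℝ | ∃ T ∈ (𝓐 : Set (H →L[ℂ] H)), ‖T‖ ≤ 1 ∧ r = ‖(inner ℂ (T x) y : ℂ)‖} :=
  ⟨0, 𝓐.zero_mem, by simp, by simp⟩

lemma omegaSet_bddAbove (𝓐 : Set (H →L[ℂ] H)) (x y : H) :
    BddAbove {r : ℝ | ∃ T ∈ 𝓐, ‖T‖ ≤ 1 ∧ r = ‖(inner ℂ (T x) y : ℂ)‖} := by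
  refine ⟨‖x‖ * ‖y‖, ?_⟩
  rintro r ⟨T, _, hT, rfl⟩
  calc ‖(inner ℂ (T x) y : ℂ)‖ ≤ ‖T x‖ * ‖y‖ := norm_inner_le_norm _ _
    _ ≤ (‖T‖ * ‖x‖) * ‖y‖ := by gcongr; exact T.le_opNorm x
    _ ≤ (1 * ‖x‖) * ‖y‖ := by gcongr
    _ = ‖x‖ * ‖y‖ := by rw [one_mul]

lemma omegaNorm_dsum (𝓐₁ : Subalgebra ℂ (H₁ →L[ℂ] H₁)) (𝓐₂ : Subalgebra ℂ (H₂ →L[ℂ] H₂))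
    (x₁ y₁ : H₁) (x₂ y₂ : H₂) :
    omegaNorm {T | ∃ T₁ ∈ 𝓐₁, ∃ T₂ ∈ 𝓐₂, T = dsum T₁ T₂} (dvec x₁ x₂) (dvec y₁ y₂) =
      omegaNorm (𝓐₁ : Set (H₁ →L[ℂ] H₁)) x₁ y₁ + omegaNorm (𝓐₂ : Set (H₂ →L[ℂ] H₂)) x₂ y₂ := by
  set 𝓐 : Set (WithLp 2 (H₁ × H₂) →L[ℂ] WithLp 2 (H₁ × H₂)) :=
    {T | ∃ T₁ ∈ 𝓐₁, ∃ T₂ ∈ 𝓐₂, T = dsum T₁ T₂} with h𝓐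
  set S : Set ℝ := {r : ℝ | ∃ T ∈ 𝓐, ‖T‖ ≤ 1 ∧ r = ‖(inner ℂ (T (dvec x₁ x₂)) (dvec y₁ y₂) : ℂ)‖}
    with hS
  set S₁ : Set ℝ := {r : ℝ | ∃ T ∈ (𝓐₁ : Set (H₁ →L[ℂ] H₁)), ‖T‖ ≤ 1 ∧
    r = ‖(inner ℂ (T x₁) y₁ : ℂ)‖} with hS₁
  set S₂ : Set ℝ := {r : ℝ | ∃ T ∈ (𝓐₂ : Set (H₂ →L[ℂ] H₂)), ‖T‖ ≤ 1 ∧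
    r = ‖(inner ℂ (T x₂) y₂ : ℂ)‖} with hS₂
  have hne₁ : S₁.Nonempty := ⟨0, omegaSet_zero_mem 𝓐₁ x₁ y₁⟩
  have hne₂ : S₂.Nonempty := ⟨0, omegaSet_zero_mem 𝓐₂ x₂ y₂⟩
  have hneS : S.Nonempty := by
    refine ⟨0, dsum 0 0, ⟨0, 𝓐₁.zero_mem, 0, 𝓐₂.zero_mem, rfl⟩, ?_, ?_⟩
    · rw [dsum_zero, norm_zero]; exact zero_le_one
    · rw [dsum_zero]; simp
  have hbd₁ : BddAbove S₁ := omegaSet_bddAbove _ _ _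
  have hbd₂ : BddAbove S₂ := omegaSet_bddAbove _ _ _
  have hbdS : BddAbove S := omegaSet_bddAbove _ _ _
  have hinner : ∀ (T₁ : H₁ →L[ℂ] H₁) (T₂ : H₂ →L[ℂ] H₂),
      (inner ℂ (dsum T₁ T₂ (dvec x₁ x₂)) (dvec y₁ y₂) : ℂ) =
        inner ℂ (T₁ x₁) y₁ + inner ℂ (T₂ x₂) y₂ := fun T₁ T₂ => rfl
  show sSup S = sSup S₁ + sSup S₂
  apply le_antisymm
  · refine csSup_le hneS ?_
    rintro r ⟨T, ⟨T₁, hT₁, T₂, hT₂, rfl⟩, hn, rfl⟩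
    obtain ⟨n1, n2⟩ := norm_comp_le hn
    rw [hinner]
    calc ‖(inner ℂ (T₁ x₁) y₁ + inner ℂ (T₂ x₂) y₂ : ℂ)‖
        ≤ ‖(inner ℂ (T₁ x₁) y₁ : ℂ)‖ + ‖(inner ℂ (T₂ x₂) y₂ : ℂ)‖ := norm_add_le _ _
      _ ≤ sSup S₁ + sSup S₂ := by
          gcongr
          · exact le_csSup hbd₁ ⟨T₁, hT₁, n1, rfl⟩
          · exact le_csSup hbd₂ ⟨T₂, hT₂, n2, rfl⟩
  · have key : ∀ a ∈ S₁, ∀ b ∈ S₂, a + b ∈ S := by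
      rintro a ⟨T₁, hT₁, n1, rfl⟩ b ⟨T₂, hT₂, n2, rfl⟩
      obtain ⟨l, hl, hlc⟩ := exists_unit_conj_mul (inner ℂ (T₁ x₁) y₁ : ℂ)
      obtain ⟨m, hm, hmd⟩ := exists_unit_conj_mul (inner ℂ (T₂ x₂) y₂ : ℂ)
      refine ⟨dsum (l • T₁) (m • T₂), ⟨l • T₁, 𝓐₁.smul_mem hT₁ l, m • T₂, 𝓐₂.smul_mem hT₂ m,
        rfl⟩, ?_, ?_⟩
      · exact dsum_norm_le (by rw [norm_smul, hl, one_mul]; exact n1)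
          (by rw [norm_smul, hm, one_mul]; exact n2)
      · rw [hinner]
        have e1 : (inner ℂ ((l • T₁) x₁) y₁ : ℂ) = (‖(inner ℂ (T₁ x₁) y₁ : ℂ)‖ : ℂ) := by
          rw [ContinuousLinearMap.smul_apply, inner_smul_left, hlc]
        have e2 : (inner ℂ ((m • T₂) x₂) y₂ : ℂ) = (‖(inner ℂ (T₂ x₂) y₂ : ℂ)‖ : ℂ) := by
          rw [ContinuousLinearMap.smul_apply, inner_smul_left, hmd]
        rw [e1, e2, ← Complex.ofReal_add, Complex.norm_real,
          Real.norm_of_nonneg (by positivity)]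
    have step : ∀ a ∈ S₁, a + sSup S₂ ≤ sSup S := by
      intro a ha
      have : sSup S₂ ≤ sSup S - a :=
        csSup_le hne₂ fun b hb => by linarith [le_csSup hbdS (key a ha b hb)]
      linarith
    have : sSup S₁ ≤ sSup S - sSup S₂ := csSup_le hne₁ fun a ha => by linarith [step a ha]
    linarith

lemma one_sub_dsum (L₁ : H₁ →L[ℂ] H₁) (L₂ : H₂ →L[ℂ] H₂) :
    (1 : WithLp 2 (H₁ × H₂) →L[ℂ] WithLp 2 (H₁ × H₂)) - dsum L₁ L₂ = dsum (1 - L₁) (1 - L₂) := by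
  rw [← dsum_one, dsum_sub]

def comp₁ (A : WithLp 2 (H₁ × H₂) →L[ℂ] WithLp 2 (H₁ × H₂)) : H₁ →L[ℂ] H₁ :=
  (ContinuousLinearMap.fst ℂ H₁ H₂) ∘L
    ((WithLp.prodContinuousLinearEquiv 2 ℂ H₁ H₂ : WithLp 2 (H₁ × H₂) →L[ℂ] H₁ × H₂)) ∘L A ∘L
    ((WithLp.prodContinuousLinearEquiv 2 ℂ H₁ H₂).symm : H₁ × H₂ →L[ℂ] WithLp 2 (H₁ × H₂)) ∘L
    (ContinuousLinearMap.inl ℂ H₁ H₂)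

def comp₂ (A : WithLp 2 (H₁ × H₂) →L[ℂ] WithLp 2 (H₁ × H₂)) : H₂ →L[ℂ] H₂ :=
  (ContinuousLinearMap.snd ℂ H₁ H₂) ∘L
    ((WithLp.prodContinuousLinearEquiv 2 ℂ H₁ H₂ : WithLp 2 (H₁ × H₂) →L[ℂ] H₁ × H₂)) ∘L A ∘L
    ((WithLp.prodContinuousLinearEquiv 2 ℂ H₁ H₂).symm : H₁ × H₂ →L[ℂ] WithLp 2 (H₁ × H₂)) ∘L
    (ContinuousLinearMap.inr ℂ H₁ H₂)

lemma comp₁_apply (A : WithLp 2 (H₁ × H₂) →L[ℂ] WithLp 2 (H₁ × H₂)) (x : H₁) :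
    comp₁ A x = (A (dvec x 0)).fst := rfl

lemma comp₂_apply (A : WithLp 2 (H₁ × H₂) →L[ℂ] WithLp 2 (H₁ × H₂)) (x : H₂) :
    comp₂ A x = (A (dvec 0 x)).snd := rfl

lemma eq_dsum_of_comm {A : WithLp 2 (H₁ × H₂) →L[ℂ] WithLp 2 (H₁ × H₂)}
    (hc : A * dsum 1 0 = dsum 1 0 * A) : A = dsum (comp₁ A) (comp₂ A) := by
  have e2 : ∀ w : WithLp 2 (H₁ × H₂), (dsum 1 0 : _ →L[ℂ] _) w = dvec w.fst 0 := fun _ => rfl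
  have e2' : ∀ w : WithLp 2 (H₁ × H₂), (dsum 0 1 : _ →L[ℂ] _) w = dvec 0 w.snd := fun _ => rfl
  have hc' : A * dsum 0 1 = dsum 0 1 * A := by
    have e3 : (dsum 0 1 : WithLp 2 (H₁ × H₂) →L[ℂ] _) = 1 - dsum 1 0 := by
      rw [one_sub_dsum]; norm_num
    rw [e3, mul_sub, sub_mul, one_mul, mul_one, hc]
  refine ContinuousLinearMap.ext fun v => ?_
  have hfun : ∀ w, A ((dsum 1 0 : WithLp 2 (H₁ × H₂) →L[ℂ] _) w) =
      (dsum 1 0 : WithLp 2 (H₁ × H₂) →L[ℂ] _) (A w) := by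
    intro w
    have h := congrArg (fun B : WithLp 2 (H₁ × H₂) →L[ℂ] WithLp 2 (H₁ × H₂) => B w) hc
    simpa only [ContinuousLinearMap.mul_apply] using h
  have hfun' : ∀ w, A ((dsum 0 1 : WithLp 2 (H₁ × H₂) →L[ℂ] _) w) =
      (dsum 0 1 : WithLp 2 (H₁ × H₂) →L[ℂ] _) (A w) := by
    intro w
    have h := congrArg (fun B : WithLp 2 (H₁ × H₂) →L[ℂ] WithLp 2 (H₁ × H₂) => B w) hc'
    simpa only [ContinuousLinearMap.mul_apply] using h
  have h1 : A (dvec v.fst 0) = dvec ((A (dvec v.fst 0)).fst) 0 := hfun (dvec v.fst 0)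
  have h2 : A (dvec 0 v.snd) = dvec 0 ((A (dvec 0 v.snd)).snd) := hfun' (dvec 0 v.snd)
  have hv : v = dvec v.fst 0 + dvec 0 v.snd := by
    rw [dvec_add, add_zero, zero_add, dvec_eta]
  conv_lhs => rw [hv]
  rw [map_add, h1, h2, dvec_add, add_zero, zero_add]
  rfl

lemma latOf_dsum (𝓐₁ : Subalgebra ℂ (H₁ →L[ℂ] H₁)) (𝓐₂ : Subalgebra ℂ (H₂ →L[ℂ] H₂)) :
    latOf {T | ∃ T₁ ∈ 𝓐₁, ∃ T₂ ∈ 𝓐₂, T = dsum T₁ T₂} =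
      {L | ∃ L₁ ∈ latOf (𝓐₁ : Set (H₁ →L[ℂ] H₁)), ∃ L₂ ∈ latOf (𝓐₂ : Set (H₂ →L[ℂ] H₂)),
        L = dsum L₁ L₂} := by
  ext L
  constructor
  · rintro ⟨⟨hsa, hid⟩, hinv⟩
    have hP₁sa : IsSelfAdjoint (dsum (1 : H₁ →L[ℂ] H₁) (0 : H₂ →L[ℂ] H₂)) :=
      isSelfAdjoint_dsum (IsSelfAdjoint.one _) (by rw [isSelfAdjoint_iff, star_zero])
    have h0 := hinv (dsum 1 0) ⟨1, 𝓐₁.one_mem, 0, 𝓐₂.zero_mem, rfl⟩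
    have h1 : dsum 1 0 * L = L * (dsum 1 0 * L) := by
      have : dsum 1 0 * L - L * (dsum 1 0 * L) = 0 := by
        rw [← h0]; noncomm_ring
      linear_combination (norm := noncomm_ring) this
    have h2 : L * dsum 1 0 = (L * dsum 1 0) * L := by
      have := congrArg star h1
      simpa [star_mul, hsa.star_eq, hP₁sa.star_eq, mul_assoc] using this
    have hcomm : L * dsum 1 0 = dsum 1 0 * L := by
      rw [h2, mul_assoc, ← h1]
    have hLd : L = dsum (comp₁ L) (comp₂ L) := eq_dsum_of_comm hcomm
    have hsa' := hLd ▸ hsa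
    have hid' := hid
    rw [hLd, dsum_mul] at hid'
    obtain ⟨hq₁, hq₂⟩ := dsum_inj hid'
    obtain ⟨hs₁, hs₂⟩ := isSelfAdjoint_dsum_iff.mp hsa'
    refine ⟨comp₁ L, ⟨⟨hs₁, hq₁⟩, ?_⟩, comp₂ L, ⟨⟨hs₂, hq₂⟩, ?_⟩, hLd⟩
    · intro T₁ hT₁
      have h := hinv (dsum T₁ 0) ⟨T₁, hT₁, 0, 𝓐₂.zero_mem, rfl⟩
      rw [hLd, one_sub_dsum, dsum_mul, dsum_mul, ← dsum_zero] at h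
      exact (dsum_inj h).1
    · intro T₂ hT₂
      have h := hinv (dsum 0 T₂) ⟨0, 𝓐₁.zero_mem, T₂, hT₂, rfl⟩
      rw [hLd, one_sub_dsum, dsum_mul, dsum_mul, ← dsum_zero] at h
      exact (dsum_inj h).2
  · rintro ⟨L₁, ⟨⟨sa1, id1⟩, inv1⟩, L₂, ⟨⟨sa2, id2⟩, inv2⟩, rfl⟩
    refine ⟨⟨isSelfAdjoint_dsum sa1 sa2, by rw [dsum_mul, id1, id2]⟩, ?_⟩
    rintro T ⟨T₁, hT₁, T₂, hT₂, rfl⟩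
    rw [one_sub_dsum, dsum_mul, dsum_mul, inv1 T₁ hT₁, inv2 T₂ hT₂, dsum_zero]

lemma lat_zero_mem (𝓐 : Set (H →L[ℂ] H)) : (0 : H →L[ℂ] H) ∈ latOf 𝓐 :=
  ⟨⟨by rw [isSelfAdjoint_iff, star_zero], by rw [mul_zero]⟩, fun T _ => by rw [mul_zero]⟩


/-- If unital operator algebras `𝓐₁ ⊆ B(H₁)` and `𝓐₂ ⊆ B(H₂)` possess
property (V), then so does `𝓐 = 𝓐₁ ⊕ 𝓐₂`; moreover
`Lat 𝓐 = {L₁ ⊕ L₂ : L₁ ∈ Lat 𝓐₁, L₂ ∈ Lat 𝓐₂}` and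
`‖ω_{x,y}|_𝓐‖ = ‖ω_{x₁,y₁}|_{𝓐₁}‖ + ‖ω_{x₂,y₂}|_{𝓐₂}‖`. -/
theorem norms_of_vector_functionals_stmt10
    (𝓐₁ : Subalgebra ℂ (H₁ →L[ℂ] H₁)) (𝓐₂ : Subalgebra ℂ (H₂ →L[ℂ] H₂))
    (h₁ : PropertyV (𝓐₁ : Set (H₁ →L[ℂ] H₁))) (h₂ : PropertyV (𝓐₂ : Set (H₂ →L[ℂ] H₂))) :
    PropertyV {T | ∃ T₁ ∈ 𝓐₁, ∃ T₂ ∈ 𝓐₂, T = dsum T₁ T₂} ∧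
    latOf {T | ∃ T₁ ∈ 𝓐₁, ∃ T₂ ∈ 𝓐₂, T = dsum T₁ T₂} =
      {L | ∃ L₁ ∈ latOf (𝓐₁ : Set (H₁ →L[ℂ] H₁)), ∃ L₂ ∈ latOf (𝓐₂ : Set (H₂ →L[ℂ] H₂)),
        L = dsum L₁ L₂} ∧
    ∀ (x₁ y₁ : H₁) (x₂ y₂ : H₂),
      omegaNorm {T | ∃ T₁ ∈ 𝓐₁, ∃ T₂ ∈ 𝓐₂, T = dsum T₁ T₂} (dvec x₁ x₂) (dvec y₁ y₂) =
        omegaNorm (𝓐₁ : Set (H₁ →L[ℂ] H₁)) x₁ y₁ +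
          omegaNorm (𝓐₂ : Set (H₂ →L[ℂ] H₂)) x₂ y₂ := by
  have hlat := latOf_dsum 𝓐₁ 𝓐₂
  refine ⟨?_, hlat, fun x₁ y₁ x₂ y₂ => omegaNorm_dsum 𝓐₁ 𝓐₂ x₁ y₁ x₂ y₂⟩
  intro x y
  set 𝓐 : Set (WithLp 2 (H₁ × H₂) →L[ℂ] WithLp 2 (H₁ × H₂)) :=
    {T | ∃ T₁ ∈ 𝓐₁, ∃ T₂ ∈ 𝓐₂, T = dsum T₁ T₂} with h𝓐
  set S : Set ℝ := {r : ℝ | ∃ L ∈ latOf 𝓐, r = ‖x - L x‖ ^ 2 + ‖L y‖ ^ 2} with hS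
  set S₁ : Set ℝ := {r : ℝ | ∃ L ∈ latOf (𝓐₁ : Set (H₁ →L[ℂ] H₁)),
    r = ‖x.fst - L x.fst‖ ^ 2 + ‖L y.fst‖ ^ 2} with hS₁
  set S₂ : Set ℝ := {r : ℝ | ∃ L ∈ latOf (𝓐₂ : Set (H₂ →L[ℂ] H₂)),
    r = ‖x.snd - L x.snd‖ ^ 2 + ‖L y.snd‖ ^ 2} with hS₂
  have hne₁ : S₁.Nonempty := ⟨_, 0, lat_zero_mem _, rfl⟩
  have hne₂ : S₂.Nonempty := ⟨_, 0, lat_zero_mem _, rfl⟩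
  have hbdS : BddBelow S := ⟨0, by rintro r ⟨L, _, rfl⟩; positivity⟩
  have key : ∀ a ∈ S₁, ∀ b ∈ S₂, a + b ∈ S := by
    rintro a ⟨L₁, hL₁, rfl⟩ b ⟨L₂, hL₂, rfl⟩
    refine ⟨dsum L₁ L₂, ?_, ?_⟩
    · rw [hlat]; exact ⟨L₁, hL₁, L₂, hL₂, rfl⟩
    · have e1 : x - dsum L₁ L₂ x = dvec (x.fst - L₁ x.fst) (x.snd - L₂ x.snd) := rfl
      have e2 : dsum L₁ L₂ y = dvec (L₁ y.fst) (L₂ y.snd) := rfl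
      rw [e1, e2, norm_dvec_sq, norm_dvec_sq]
      ring
  have step : ∀ a ∈ S₁, sInf S ≤ a + sInf S₂ := by
    intro a ha
    have h2 : sInf S - a ≤ sInf S₂ :=
      le_csInf hne₂ fun b hb => by linarith [csInf_le hbdS (key a ha b hb)]
    linarith
  have hfinal : sInf S ≤ sInf S₁ + sInf S₂ := by
    have : sInf S - sInf S₂ ≤ sInf S₁ := le_csInf hne₁ fun a ha => by linarith [step a ha]
    linarith
  calc sInf S ≤ sInf S₁ + sInf S₂ := hfinal
    _ ≤ omegaNorm (𝓐₁ : Set (H₁ →L[ℂ] H₁)) x.fst y.fst +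
        omegaNorm (𝓐₂ : Set (H₂ →L[ℂ] H₂)) x.snd y.snd := add_le_add (h₁ _ _) (h₂ _ _)
    _ = omegaNorm 𝓐 x y := (omegaNorm_dsum 𝓐₁ 𝓐₂ x.fst y.fst x.snd y.snd).symm
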